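/- Define a relation on the edges of a finite simple graph G by: e ~ f iff e = f or there is a cycle of G containing both e and f. Then this relation is an equivalence relation on the edge set of G. -/

import Mathlib

open SimpleGraph

/-- Edges `e` and `f` lie on a common cycle of `G`. -/
def OnCommonCycle {V : Type} (G : SimpleGraph V) (e f : Sym2 V) : Prop :=
  ∃ (w : V) (c : G.Walk w w), c.IsCycle ∧ e ∈ c.edges ∧ f ∈ c.edges

namespace OCChelp
open SimpleGraph Walk
variable {V : Type} {G : SimpleGraph V}

/-- If a path starts at `t` and contains the edge `s(t,y)`, that edge is the first one. -/
lemma eq_cons_of_start_edge {t s y : V} {p : G.Walk t s} (hp : p.IsPath) (hty : t ≠ y)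
    (he : s(t, y) ∈ p.edges) : ∃ (h : G.Adj t y) (r : G.Walk y s), p = Walk.cons h r := by
  cases p with
  | nil => simp at he
  | @cons _ w _ h r =>
    rw [Walk.edges_cons, List.mem_cons] at he
    rcases he with he | he
    · have hyw : y = w := by
        rcases Sym2.eq_iff.mp he with ⟨-, h2⟩ | ⟨-, h2⟩
        · exact h2
        · exact absurd h2.symm hty
      subst hyw
      exact ⟨h, r, rfl⟩
    · exact absurd (r.fst_mem_support_of_mem_edges he) ((Walk.cons_isPath_iff _ _).mp hp).2

/-- Splitting a cycle through `x` at an edge `s(x,y)` of it: the rest is a path from `y` to `x`. -/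
lemma cycle_split_at_edge {x y : V} {E : G.Walk x x} (hE : E.IsCycle) (hxy : x ≠ y)
    (hg : s(x, y) ∈ E.edges) :
    ∃ (P : G.Walk y x), P.IsPath ∧ s(x, y) ∉ P.edges ∧
      ∀ f, f ∈ E.edges ↔ f = s(x, y) ∨ f ∈ P.edges := by
  obtain ⟨w, h, q, rfl⟩ := Walk.not_nil_iff.mp hE.not_nil
  obtain ⟨hq, hxw⟩ := (Walk.cons_isCycle_iff q h).mp hE
  rw [Walk.edges_cons, List.mem_cons] at hg
  rcases hg with hg | hg
  · have hyw : y = w := by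
      rcases Sym2.eq_iff.mp hg with ⟨-, h2⟩ | ⟨-, h2⟩
      · exact h2
      · exact absurd h2.symm hxy
    subst hyw
    exact ⟨q, hq, hxw, fun f => by rw [Walk.edges_cons, List.mem_cons]⟩
  · -- the edge is inside q; then it is the last edge of q
    have hq' : q.reverse.IsPath := hq.reverse
    have he' : s(x, y) ∈ q.reverse.edges := by
      rw [Walk.edges_reverse, List.mem_reverse]; exact hg
    obtain ⟨h', r, hqr⟩ := eq_cons_of_start_edge hq' hxy he'
    have hxr : x ∉ r.support := ((Walk.cons_isPath_iff _ _).mp (hqr ▸ hq')).2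
    have hr : r.IsPath := ((Walk.cons_isPath_iff _ _).mp (hqr ▸ hq')).1
    have hqe : q = r.reverse.append (Walk.cons h'.symm Walk.nil) := by
      have := congrArg Walk.reverse hqr
      rw [Walk.reverse_reverse] at this
      rw [this, Walk.reverse_cons]
    refine ⟨r.append (Walk.cons h.symm Walk.nil), ?_, ?_, ?_⟩
    · rw [Walk.isPath_def, Walk.support_append]
      simp only [Walk.support_cons, Walk.support_nil, List.tail_cons]
      rw [List.nodup_append']
      exact ⟨hr.support_nodup, List.nodup_singleton x,
        by intro z hz hz'; rw [List.mem_singleton] at hz'; exact hxr (hz' ▸ hz)⟩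
    · rw [Walk.edges_append]
      simp only [Walk.edges_cons, Walk.edges_nil, List.mem_append, List.mem_cons,
        List.not_mem_nil, or_false]
      rintro (hmem | hmem)
      · exact hxr (r.fst_mem_support_of_mem_edges hmem)
      · -- s(x,y) = s(w,x) forces y = w, but then s(x,y)=s(x,w) ∈ q.edges, contradiction
        have hyw : y = w := by
          rcases Sym2.eq_iff.mp hmem with ⟨h1, h2⟩ | ⟨h1, h2⟩
          · exact absurd h2.symm hxy
          · exact h2
        subst hyw
        exact hxw hg
    · intro f
      rw [Walk.edges_cons, List.mem_cons, hqe]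
      rw [Walk.edges_append, Walk.edges_append]
      simp only [Walk.edges_reverse, Walk.edges_cons, Walk.edges_nil, List.mem_append,
        List.mem_reverse, List.mem_cons, List.not_mem_nil, or_false]
      have e1 : (f = s(w, x)) ↔ (f = s(x, w)) := by rw [Sym2.eq_swap]
      have e2 : (f = s(y, x)) ↔ (f = s(x, y)) := by rw [Sym2.eq_swap]
      tauto

/-- Split a walk at the first vertex belonging to `S`. -/
lemma exists_split_first (S : Set V) :
    ∀ {u v : V} (P : G.Walk u v), (∃ w ∈ P.support, w ∈ S) →
    ∃ (a : V) (P1 : G.Walk u a) (P2 : G.Walk a v),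
      P1.append P2 = P ∧ a ∈ S ∧ ∀ w ∈ P1.support, w ∈ S → w = a := by
  intro u v P
  induction P with
  | nil =>
    rintro ⟨w, hw, hwS⟩
    rw [Walk.support_nil, List.mem_singleton] at hw
    subst hw
    exact ⟨w, Walk.nil, Walk.nil, rfl, hwS, by simp⟩
  | @cons u w v h q ih =>
    rintro ⟨z, hz, hzS⟩
    by_cases hu : u ∈ S
    · exact ⟨u, Walk.nil, Walk.cons h q, rfl, hu, by simp⟩
    · have hz' : z ∈ q.support := by
        rcases List.mem_cons.mp (Walk.support_cons h q ▸ hz : z ∈ u :: q.support) with h' | h'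
        · exact absurd (h' ▸ hzS) hu
        · exact h'
      obtain ⟨a, q1, q2, heq, ha, hfirst⟩ := ih ⟨z, hz', hzS⟩
      refine ⟨a, Walk.cons h q1, q2, by rw [Walk.cons_append, heq], ha, ?_⟩
      intro w' hw' hw'S
      rcases List.mem_cons.mp (Walk.support_cons h q1 ▸ hw' : w' ∈ u :: q1.support) with h' | h'
      · exact absurd (h' ▸ hw'S) hu
      · exact hfirst w' h' hw'S

/-- If a walk meets another walk's support in at most the single vertex `a`,
then none of its edges is an edge of the other walk. -/
lemma edge_not_mem_of_almost_disjoint {s t z z' a : V} {p : G.Walk s t} {c2 : G.Walk z z'}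
    (h : ∀ w ∈ p.support, w ∈ c2.support → w = a) {f' : Sym2 V}
    (hf : f' ∈ p.edges) : f' ∉ c2.edges := by
  induction f' using Sym2.ind with
  | _ c d =>
    intro hfC
    have hc : c = a := h c (p.fst_mem_support_of_mem_edges hf) (c2.fst_mem_support_of_mem_edges hfC)
    have hd : d = a := h d (p.snd_mem_support_of_mem_edges hf) (c2.snd_mem_support_of_mem_edges hfC)
    exact (p.adj_of_mem_edges hf).ne (hc.trans hd.symm)

/-- Membership in the support is invariant under rotation of a closed walk. -/
lemma mem_support_rotate [DecidableEq V] {z a w : V} {c : G.Walk z z} (ha : a ∈ c.support) :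
    w ∈ (c.rotate _ ha).support ↔ w ∈ c.support := by
  rw [Walk.rotate, Walk.mem_support_append_iff]
  conv_rhs => rw [← Walk.take_spec c ha]
  rw [Walk.mem_support_append_iff, or_comm]

/-- takeUntil and dropUntil of a cycle at a vertex different from the base are paths. -/
lemma cycle_takeUntil_isPath [DecidableEq V] {a b : V} {c : G.Walk a a} (hc : c.IsCycle)
    (hb : b ∈ c.support) (hba : b ≠ a) :
    (c.takeUntil b hb).IsPath ∧ (c.dropUntil b hb).IsPath := by
  obtain ⟨w, h, q, rfl⟩ := Walk.not_nil_iff.mp hc.not_nil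
  obtain ⟨hq, _⟩ := (Walk.cons_isCycle_iff q h).mp hc
  have hbq : b ∈ q.support := by
    rcases List.mem_cons.mp (Walk.support_cons h q ▸ hb : b ∈ a :: q.support) with h' | h'
    · exact absurd h' hba
    · exact h'
  have hab : a ≠ b := hba.symm
  have htake : (Walk.cons h q).takeUntil b hb = Walk.cons h (q.takeUntil b hbq) := by
    simp [Walk.takeUntil, hab]
  have hdrop : (Walk.cons h q).dropUntil b hb = q.dropUntil b hbq := by
    simp [Walk.dropUntil, hab]
  constructor
  · rw [htake, Walk.cons_isPath_iff]
    refine ⟨hq.takeUntil hbq, ?_⟩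
    intro hmem
    have hspec := Walk.take_spec q hbq
    have hnd : q.support.Nodup := hq.support_nodup
    rw [← hspec, Walk.support_append, List.nodup_append'] at hnd
    have haend : a ∈ (q.dropUntil b hbq).support.tail := by
      have : a ∈ (q.dropUntil b hbq).support := Walk.end_mem_support _
      rw [(q.dropUntil b hbq).support_eq_cons] at this
      rcases List.mem_cons.mp this with h' | h'
      · exact absurd h' hba.symm
      · exact h'
    exact hnd.2.2 hmem haend
  · rw [hdrop]
    exact hq.dropUntil hbq

lemma trans_core {u v p₀ q₀ x y : V} {C : G.Walk u u} {D : G.Walk v v}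
    (hC : C.IsCycle) (hD : D.IsCycle) {e : Sym2 V}
    (heC : e ∈ C.edges) (hfC : s(p₀, q₀) ∈ C.edges) (hfD : s(p₀, q₀) ∈ D.edges)
    (hgD : s(x, y) ∈ D.edges) (hgC : s(x, y) ∉ C.edges) : OnCommonCycle G e s(x, y) := by
  classical
  have hxy : G.Adj x y := D.adj_of_mem_edges hgD
  have hnexy : x ≠ y := hxy.ne
  have hpq : p₀ ≠ q₀ := (C.adj_of_mem_edges hfC).ne
  have hfg : s(p₀, q₀) ≠ s(x, y) := fun h => hgC (h ▸ hfC)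
  -- rotate D to x and remove the edge s(x,y), leaving a path P from y to x
  have hxD : x ∈ D.support := D.fst_mem_support_of_mem_edges hgD
  have hE : (D.rotate x hxD).IsCycle := hD.rotate hxD
  have hEedges : ∀ f', f' ∈ (D.rotate x hxD).edges ↔ f' ∈ D.edges :=
    fun f' => (Walk.rotate_edges D x hxD).mem_iff
  obtain ⟨P, hP, hgP, hPE⟩ := cycle_split_at_edge hE hnexy ((hEedges _).mpr hgD)
  have hfP : s(p₀, q₀) ∈ P.edges := by
    rcases (hPE _).mp ((hEedges _).mpr hfD) with h' | h'
    · exact absurd h' hfg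
    · exact h'
  -- split P at the first C-vertex from each side
  have hpP : p₀ ∈ P.support := P.fst_mem_support_of_mem_edges hfP
  have hpC : p₀ ∈ C.support := C.fst_mem_support_of_mem_edges hfC
  have hqC : q₀ ∈ C.support := C.snd_mem_support_of_mem_edges hfC
  obtain ⟨a, P1, P2, hsplit1, haC, hfirst1⟩ :=
    exists_split_first {w | w ∈ C.support} P ⟨p₀, hpP, hpC⟩
  have haC' : a ∈ C.support := haC
  obtain ⟨b, Q1, Q2, hsplit2, hbC, hfirst2⟩ :=
    exists_split_first {w | w ∈ C.support} P2.reverse ⟨a, Walk.end_mem_support _, haC⟩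
  have hbC' : b ∈ C.support := hbC
  have hPeq : P1.append ((Q2.reverse).append Q1.reverse) = P := by
    rw [← hsplit1]
    congr 1
    have h2 := congrArg Walk.reverse hsplit2
    rw [Walk.reverse_append, Walk.reverse_reverse] at h2
    exact h2
  have hP' : (P1.append ((Q2.reverse).append Q1.reverse)).IsPath := hPeq ▸ hP
  have hP1path : P1.IsPath := hP'.of_append_left
  have hrest : ((Q2.reverse).append Q1.reverse).IsPath := hP'.of_append_right
  have hMpath : Q2.reverse.IsPath := hrest.of_append_left
  have hQ1path : Q1.IsPath := by
    have h2 := hrest.of_append_right.reverse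
    rwa [Walk.reverse_reverse] at h2
  have hPedges : (P1.edges ++ ((Q2.reverse).edges ++ (Q1.reverse).edges)).Nodup := by
    have h2 := hP'.isTrail.edges_nodup
    rwa [Walk.edges_append, Walk.edges_append] at h2
  have hPsup : (P1.support ++ ((Q2.reverse).support.tail ++ (Q1.reverse).support.tail)).Nodup := by
    have h2 := hP'.support_nodup
    rwa [Walk.support_append, Walk.tail_support_append] at h2
  -- a ≠ b
  have hab : a ≠ b := by
    intro hab
    subst hab
    have h3 : s(p₀,q₀) ∈ P1.edges ∨ s(p₀,q₀) ∈ (Q2.reverse).edges ∨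
        s(p₀,q₀) ∈ (Q1.reverse).edges := by
      have h4 := hfP
      rw [← hPeq, Walk.edges_append, Walk.edges_append] at h4
      simpa using h4
    rcases h3 with h' | h' | h'
    · have hp1 : p₀ = a := hfirst1 p₀ (P1.fst_mem_support_of_mem_edges h') hpC
      have hq1 : q₀ = a := hfirst1 q₀ (P1.snd_mem_support_of_mem_edges h') hqC
      exact hpq (hp1.trans hq1.symm)
    · have hnil : Q2.reverse = Walk.nil := by
        have h5 := SimpleGraph.Path.loop_eq ⟨Q2.reverse, hMpath⟩
        simpa [Subtype.ext_iff] using h5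
      rw [hnil] at h'
      simp at h'
    · rw [Walk.edges_reverse, List.mem_reverse] at h'
      have hp1 : p₀ = a := hfirst2 p₀ (Q1.fst_mem_support_of_mem_edges h') hpC
      have hq1 : q₀ = a := hfirst2 q₀ (Q1.snd_mem_support_of_mem_edges h') hqC
      exact hpq (hp1.trans hq1.symm)
  -- rotate C to a, split at b, pick the arc containing e
  have hC'cyc : (C.rotate a haC').IsCycle := hC.rotate haC'
  have hC'edges : ∀ f', f' ∈ (C.rotate a haC').edges ↔ f' ∈ C.edges :=
    fun f' => (Walk.rotate_edges C a haC').mem_iff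
  have hC'sup : ∀ w, w ∈ (C.rotate a haC').support ↔ w ∈ C.support :=
    fun w => mem_support_rotate haC'
  have hb' : b ∈ (C.rotate a haC').support := (hC'sup b).mpr hbC'
  obtain ⟨htake, hdrop⟩ := cycle_takeUntil_isPath hC'cyc hb' (Ne.symm hab)
  have heC' : e ∈ (C.rotate a haC').edges := (hC'edges e).mpr heC
  have heRR : e ∈ ((C.rotate a haC').takeUntil b hb').edges ∨
      e ∈ ((C.rotate a haC').dropUntil b hb').edges := by
    rw [← Walk.take_spec (C.rotate a haC') hb', Walk.edges_append] at heC'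
    simpa using heC'
  obtain ⟨R, hRpath, heR, hRsup, hRedge⟩ :
      ∃ R : G.Walk a b, R.IsPath ∧ e ∈ R.edges ∧ (∀ w ∈ R.support, w ∈ C.support) ∧
        (∀ f' ∈ R.edges, f' ∈ C.edges) := by
    rcases heRR with h' | h'
    · exact ⟨(C.rotate a haC').takeUntil b hb', htake, h',
        fun w hw => (hC'sup w).mp (Walk.support_takeUntil_subset _ _ hw),
        fun f' hf' => (hC'edges f').mp (Walk.edges_takeUntil_subset _ _ hf')⟩
    · refine ⟨((C.rotate a haC').dropUntil b hb').reverse, hdrop.reverse, ?_, ?_, ?_⟩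
      · rw [Walk.edges_reverse, List.mem_reverse]; exact h'
      · intro w hw
        rw [Walk.support_reverse, List.mem_reverse] at hw
        exact (hC'sup w).mp (Walk.support_dropUntil_subset _ _ hw)
      · intro f' hf'
        rw [Walk.edges_reverse, List.mem_reverse] at hf'
        exact (hC'edges f').mp (Walk.edges_dropUntil_subset _ _ hf')
  -- key non-membership facts
  have hgP1 : s(x,y) ∉ P1.edges := fun h' => hgP (by
    rw [← hPeq, Walk.edges_append]
    exact List.mem_append_left _ h')
  have hgQ1 : s(x,y) ∉ Q1.edges := fun h' => hgP (by
    rw [← hPeq, Walk.edges_append, Walk.edges_append]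
    refine List.mem_append_right _ (List.mem_append_right _ ?_)
    rw [Walk.edges_reverse, List.mem_reverse]
    exact h')
  have hgR : s(x,y) ∉ R.edges := fun h' => hgC (hRedge _ h')
  have hP1C : ∀ f' ∈ P1.edges, f' ∉ C.edges :=
    fun f' hf' => edge_not_mem_of_almost_disjoint hfirst1 hf'
  have hQ1C : ∀ f' ∈ Q1.edges, f' ∉ C.edges :=
    fun f' hf' => edge_not_mem_of_almost_disjoint hfirst2 hf'
  have hdisjP1 : List.Disjoint P1.edges ((Q2.reverse).edges ++ (Q1.reverse).edges) :=
    (List.nodup_append'.mp hPedges).2.2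
  -- the new cycle
  refine ⟨a, R.append ((Q1.reverse).append (Walk.cons hxy P1)), ?_, ?_, ?_⟩
  · rw [Walk.isCycle_def]
    refine ⟨?_, ?_, ?_⟩
    · rw [Walk.isTrail_def, Walk.edges_append, Walk.edges_append, Walk.edges_cons]
      rw [List.nodup_append']
      refine ⟨hRpath.isTrail.edges_nodup, ?_, ?_⟩
      · rw [List.nodup_append']
        refine ⟨hQ1path.reverse.isTrail.edges_nodup,
          List.nodup_cons.mpr ⟨hgP1, hP1path.isTrail.edges_nodup⟩, ?_⟩
        intro f' hf' hmem
        rw [Walk.edges_reverse, List.mem_reverse] at hf'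
        rcases List.mem_cons.mp hmem with h' | h'
        · exact hgQ1 (h' ▸ hf')
        · exact hdisjP1 h' (List.mem_append_right _
            (by rw [Walk.edges_reverse, List.mem_reverse]; exact hf'))
      · intro f' hf' hmem
        have hfC' : f' ∈ C.edges := hRedge _ hf'
        rcases List.mem_append.mp hmem with h' | h'
        · rw [Walk.edges_reverse, List.mem_reverse] at h'
          exact hQ1C _ h' hfC'
        · rcases List.mem_cons.mp h' with h'' | h''
          · exact hgC (h'' ▸ hfC')
          · exact hP1C _ h'' hfC'
    · intro hnil
      have : s(x,y) ∈ (R.append ((Q1.reverse).append (Walk.cons hxy P1))).edges := by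
        rw [Walk.edges_append, Walk.edges_append, Walk.edges_cons]
        exact List.mem_append_right _ (List.mem_append_right _ List.mem_cons_self)
      rw [hnil] at this
      simp at this
    · -- support tail nodup
      rw [Walk.support_append, Walk.tail_support_append, Walk.support_cons, List.tail_cons,
        List.tail_append_of_ne_nil (Walk.support_ne_nil R)]
      have hA1 : R.support.tail.Nodup := hRpath.support_nodup.tail
      have haA1 : a ∉ R.support.tail := by
        have h2 := hRpath.support_nodup
        rw [R.support_eq_cons] at h2
        exact (List.nodup_cons.mp h2).1
      have hA2 : (Q1.reverse).support.tail.Nodup := hQ1path.reverse.support_nodup.tail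
      have hbA2 : b ∉ (Q1.reverse).support.tail := by
        have h2 := hQ1path.reverse.support_nodup
        rw [(Q1.reverse).support_eq_cons] at h2
        exact (List.nodup_cons.mp h2).1
      have hA3 : P1.support.Nodup := hP1path.support_nodup
      have hA2C : ∀ w ∈ (Q1.reverse).support.tail, w ∉ C.support := by
        intro w hw hwC
        have hw' : w ∈ Q1.support := by
          have := List.mem_of_mem_tail hw
          rwa [Walk.support_reverse, List.mem_reverse] at this
        exact hbA2 ((hfirst2 w hw' hwC) ▸ hw)
      have hdisjsup : List.Disjoint P1.support
          ((Q2.reverse).support.tail ++ (Q1.reverse).support.tail) :=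
        (List.nodup_append'.mp hPsup).2.2
      rw [List.nodup_append']
      refine ⟨hA1, ?_, ?_⟩
      · rw [List.nodup_append']
        refine ⟨hA2, hA3, ?_⟩
        intro w hw hw3
        exact hdisjsup hw3 (List.mem_append_right _ hw)
      · intro w hw hmem
        have hwC : w ∈ C.support := hRsup w (List.mem_of_mem_tail hw)
        rcases List.mem_append.mp hmem with h' | h'
        · exact hA2C w h' hwC
        · exact haA1 ((hfirst1 w h' hwC) ▸ hw)
  · rw [Walk.edges_append]
    exact List.mem_append_left _ heR
  · rw [Walk.edges_append, Walk.edges_append, Walk.edges_cons]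
    exact List.mem_append_right _ (List.mem_append_right _ List.mem_cons_self)


lemma trans_core' {V : Type} {G : SimpleGraph V} {u v : V} {C : G.Walk u u}
    {D : G.Walk v v} (hC : C.IsCycle) (hD : D.IsCycle)
    {e f g : Sym2 V} (heC : e ∈ C.edges) (hfC : f ∈ C.edges) (hfD : f ∈ D.edges)
    (hgD : g ∈ D.edges) (hgC : g ∉ C.edges) : OnCommonCycle G e g := by
  revert hfC hfD
  induction f using Sym2.ind with
  | _ p₀ q₀ =>
  revert hgD hgC
  induction g using Sym2.ind with
  | _ x y =>
  intro hgD hgC hfC hfD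
  exact trans_core hC hD heC hfC hfD hgD hgC

end OCChelp

theorem stmt5 {V : Type} [Fintype V] (G : SimpleGraph V) :
    Equivalence (fun e f : G.edgeSet => (e : Sym2 V) = (f : Sym2 V) ∨ OnCommonCycle G e f) := by
  constructor
  · intro e
    exact Or.inl rfl
  · intro e f h
    rcases h with h | ⟨w, c, hc, h1, h2⟩
    · exact Or.inl h.symm
    · exact Or.inr ⟨w, c, hc, h2, h1⟩
  · intro e f g h1 h2
    rcases h1 with h1 | ⟨u, C, hC, heC, hfC⟩
    · rcases h2 with h2 | ⟨v, D, hD, hfD, hgD⟩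
      · exact Or.inl (h1.trans h2)
      · exact Or.inr ⟨v, D, hD, h1 ▸ hfD, hgD⟩
    · rcases h2 with h2 | ⟨v, D, hD, hfD, hgD⟩
      · exact Or.inr ⟨u, C, hC, heC, h2 ▸ hfC⟩
      · by_cases hgC : (g : Sym2 V) ∈ C.edges
        · exact Or.inr ⟨u, C, hC, heC, hgC⟩
        · exact Or.inr (OCChelp.trans_core' hC hD heC hfC hfD hgD hgC)
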